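/- arXiv:1403.2293 — 2 statements merged into one kernel-verified Lean document; each statement's English description precedes it below -/
import Mathlib

section
/- Let K be a global field and S a finite set of places of K. Let φ be an endomorphism of P^1 defined over K with good reduction outside S, and let P_0 ∈ P^1(K) be a periodic point of φ of minimal period p^e, where p is the characteristic. Set P_i = φ^i(P_0). Then for any integer of the form p^k · n with n not divisible by p and n < p^{e−k}, one has δ_𝔭(P_0, P_{p^k}) = δ_𝔭(P_0, P_{p^k · n}) for every place 𝔭 ∉ S. -/
/-!
Common definitions used to formalize the statements of
"Preperiodic points for rational functions defined over a global field
in terms of good reduction" (arXiv:1403.2293).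

* A (normalized, non-archimedean) place of a field `K` is modeled as a surjective
  discrete valuation `v : K → ℤ` (with the junk convention `v 0 = 0`).
* `P1 K` is the projective line over `K`; a point `[x : y]` is `P1.mk x y _`.
* An endomorphism of `P1` defined over `K` is a map `φ : P1 K → P1 K` admitting a
  lift by a pair of binary forms of a common degree `d`, given through their
  coefficient vectors, with nonvanishing resultant (the resultant is defined as
  the determinant of the Sylvester matrix).
* `φ` has good reduction at a place `pl` if it admits a lift whose coefficients
  are `pl`-integral and whose resultant is a `pl`-unit.
* `logDist` is the `𝔭`-adic logarithmic distance `δ_𝔭`; two points of `P1 K` have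
  the same reduction modulo `pl` if and only if `0 < logDist pl P Q`.
* The multiplier of a fixed point `[x:y]` of a map lifted by the forms `(a, b)` of
  degree `d` is computed by the trace formula
  `λ = (∂F/∂x (x,y) + ∂G/∂y (x,y) - d⬝c)/c`, where `c` is the scalar with
  `F(x,y) = c⬝x` and `G(x,y) = c⬝y`.
-/

namespace ArxivPreper

/-- A normalized non-archimedean place of `K`: a surjective discrete valuation
`v : K → ℤ`, with the junk convention `v 0 = 0`. -/
structure Place (K : Type*) [Field K] where
  v : K → ℤ
  v_zero : v 0 = 0
  v_mul : ∀ x y : K, x ≠ 0 → y ≠ 0 → v (x * y) = v x + v y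
  v_add : ∀ x y : K, x ≠ 0 → y ≠ 0 → x + y ≠ 0 → min (v x) (v y) ≤ v (x + y)
  v_surj : ∀ n : ℤ, ∃ x : K, x ≠ 0 ∧ v x = n

namespace Place

variable {K : Type*} [Field K] (pl : Place K)

lemma v_one : pl.v 1 = 0 := by
  have h := pl.v_mul 1 1 one_ne_zero one_ne_zero
  rw [one_mul] at h
  omega

lemma v_neg_one : pl.v (-1 : K) = 0 := by
  have h := pl.v_mul (-1 : K) (-1) (by norm_num) (by norm_num)
  rw [show ((-1 : K) * (-1)) = 1 by ring, pl.v_one] at h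
  omega

lemma v_neg (x : K) : pl.v (-x) = pl.v x := by
  by_cases h : x = 0
  · simp [h]
  · have h1 := pl.v_mul (-1) x (by norm_num) h
    rw [show (-1 : K) * x = -x by ring, pl.v_neg_one] at h1
    omega

lemma v_mul_nonneg {x y : K} (hx : 0 ≤ pl.v x) (hy : 0 ≤ pl.v y) : 0 ≤ pl.v (x * y) := by
  by_cases h1 : x = 0
  · simp [h1, pl.v_zero]
  by_cases h2 : y = 0
  · simp [h2, pl.v_zero]
  rw [pl.v_mul x y h1 h2]
  omega

lemma v_add_nonneg {x y : K} (hx : 0 ≤ pl.v x) (hy : 0 ≤ pl.v y) : 0 ≤ pl.v (x + y) := by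
  by_cases h1 : x = 0
  · simpa [h1] using hy
  by_cases h2 : y = 0
  · simpa [h2] using hx
  by_cases h3 : x + y = 0
  · rw [h3, pl.v_zero]
  exact le_trans (le_min hx hy) (pl.v_add x y h1 h2 h3)

lemma hred_add {a b : K} (ha : a = 0 ∨ 0 < pl.v a) (hb : b = 0 ∨ 0 < pl.v b) :
    a + b = 0 ∨ 0 < pl.v (a + b) := by
  rcases ha with ha | ha
  · subst ha; simpa using hb
  rcases hb with hb | hb
  · subst hb; simpa using Or.inr ha
  by_cases h3 : a + b = 0
  · exact Or.inl h3
  · right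
    have hA : a ≠ 0 := by
      intro h; rw [h, pl.v_zero] at ha; exact absurd ha (lt_irrefl 0)
    have hB : b ≠ 0 := by
      intro h; rw [h, pl.v_zero] at hb; exact absurd hb (lt_irrefl 0)
    exact lt_of_lt_of_le (lt_min ha hb) (pl.v_add a b hA hB h3)

lemma hred_mul {a b : K} (ha : 0 ≤ pl.v a) (hb : b = 0 ∨ 0 < pl.v b) :
    a * b = 0 ∨ 0 < pl.v (a * b) := by
  rcases hb with hb | hb
  · exact Or.inl (by rw [hb, mul_zero])
  by_cases h1 : a = 0
  · exact Or.inl (by rw [h1, zero_mul])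
  by_cases h2 : b = 0
  · exact Or.inl (by rw [h2, mul_zero])
  · right
    rw [pl.v_mul a b h1 h2]
    omega

end Place

/-- `K` is a global field: a number field, or a finite extension of `𝔽_p(t)`. -/
def IsGlobalField (K : Type*) [Field K] : Prop :=
  NumberField K ∨
    ∃ (p : ℕ) (hp : Fact p.Prime),
      letI := hp
      ∃ A : Algebra (RatFunc (ZMod p)) K,
        letI := A
        FiniteDimensional (RatFunc (ZMod p)) K

variable {K : Type*} [Field K]

/-- The projective line over `K`. -/
abbrev P1 (K : Type*) [Field K] := Projectivization K (Fin 2 → K)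

/-- The point `[x : y]` of the projective line. -/
def P1.mk (x y : K) (h : ¬(x = 0 ∧ y = 0)) : P1 K :=
  Projectivization.mk K ![x, y]
    (fun h0 => h ⟨by simpa using congrFun h0 0, by simpa using congrFun h0 1⟩)

/-- The point `[0 : 1]`. -/
def P1zero : P1 K := P1.mk 0 1 (fun h => one_ne_zero h.2)

/-- Value at `(x, y)` of the binary form of degree `d` with coefficient
vector `a` (the coefficient of `x^i y^(d-i)` is `a i`). -/
def formEval (d : ℕ) (a : Fin (d + 1) → K) (x y : K) : K :=
  ∑ i : Fin (d + 1), a i * x ^ (i : ℕ) * y ^ (d - (i : ℕ))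

/-- The Sylvester matrix of two binary forms of degree `d`, given by their
coefficient vectors. -/
def sylvester (d : ℕ) (a b : Fin (d + 1) → K) : Matrix (Fin (d + d)) (Fin (d + d)) K :=
  Matrix.of fun i j =>
    if hi : (i : ℕ) < d then
      if h : (i : ℕ) ≤ (j : ℕ) ∧ (j : ℕ) ≤ (i : ℕ) + d then a ⟨(j : ℕ) - (i : ℕ), by omega⟩
      else 0
    else
      if h : (i : ℕ) - d ≤ (j : ℕ) ∧ (j : ℕ) ≤ (i : ℕ) then
        b ⟨(j : ℕ) - ((i : ℕ) - d), by omega⟩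
      else 0

/-- The resultant of two binary forms of degree `d`: the determinant of their
Sylvester matrix. -/
def resultant (d : ℕ) (a b : Fin (d + 1) → K) : K := (sylvester d a b).det

/-- `(a, b)` is a pair of coefficient vectors of binary forms `F`, `G` of common degree `d`,
with nonzero resultant, such that `φ([x:y]) = [F(x,y) : G(x,y)]` on `P1 K`.  This witnesses
that `φ` is an endomorphism of the projective line defined over `K` (of degree `d`). -/
def IsLift (φ : P1 K → P1 K) (d : ℕ) (a b : Fin (d + 1) → K) : Prop :=
  resultant d a b ≠ 0 ∧
    ∀ (x y : K) (h : ¬(x = 0 ∧ y = 0)),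
      ∃ h' : ¬(formEval d a x y = 0 ∧ formEval d b x y = 0),
        φ (P1.mk x y h) = P1.mk (formEval d a x y) (formEval d b x y) h'

/-- `φ` is an endomorphism of `P1` defined over `K`. -/
def IsEndo (φ : P1 K → P1 K) : Prop := ∃ d a b, IsLift φ d a b

/-- `φ` has good reduction at the place `pl`: it can be written as `[F : G]` with `F`, `G`
binary forms of a common degree whose coefficients are `pl`-integral and whose resultant
is a `pl`-unit. -/
def GoodReduction (pl : Place K) (φ : P1 K → P1 K) : Prop :=
  ∃ (d : ℕ) (a b : Fin (d + 1) → K),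
    IsLift φ d a b ∧ (∀ i, 0 ≤ pl.v (a i)) ∧ (∀ i, 0 ≤ pl.v (b i)) ∧
      pl.v (resultant d a b) = 0

open Classical in
/-- The valuation of a place extended by `v 0 = ⊤`. -/
noncomputable def extv (pl : Place K) (x : K) : WithTop ℤ :=
  if x = 0 then ⊤ else (pl.v x : WithTop ℤ)

open Classical in
/-- `min (v x) (v y)` for a nonzero vector `(x, y)`, ignoring vanishing coordinates. -/
noncomputable def vminVec (pl : Place K) (w : Fin 2 → K) : ℤ :=
  if w 0 = 0 then pl.v (w 1)
  else if w 1 = 0 then pl.v (w 0)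
  else min (pl.v (w 0)) (pl.v (w 1))

/-- The `𝔭`-adic logarithmic distance
`δ_𝔭(P,Q) = v(x₁y₂ - x₂y₁) - min (v x₁) (v y₁) - min (v x₂) (v y₂)`
(computed on fixed representatives; it is independent of the choice of homogeneous
coordinates).  Note `δ_𝔭(P,Q) = ⊤` iff `P = Q`, and two points have the same reduction
modulo `pl` iff `0 < δ_𝔭(P,Q)`. -/
noncomputable def logDist (pl : Place K) (P Q : P1 K) : WithTop ℤ :=
  extv pl (P.rep 0 * Q.rep 1 - Q.rep 0 * P.rep 1) +
    ((-(vminVec pl P.rep) - vminVec pl Q.rep : ℤ) : WithTop ℤ)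

/-- The forward orbit `{φ^n(P) : n ∈ ℕ}` of `P` under `φ`. -/
def orbit (φ : P1 K → P1 K) (P : P1 K) : Set (P1 K) := Set.range fun n : ℕ => φ^[n] P

/-- `P` is preperiodic for `φ`: its forward orbit is finite. -/
def Preperiodic (φ : P1 K → P1 K) (P : P1 K) : Prop := (orbit φ P).Finite

/-- `P` is periodic for `φ`. -/
def PeriodicPt (φ : P1 K → P1 K) (P : P1 K) : Prop := ∃ n : ℕ, 0 < n ∧ φ^[n] P = P

/-- `x` is an `S`-unit of `K`. -/
def IsSUnit (S : Finset (Place K)) (x : K) : Prop :=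
  x ≠ 0 ∧ ∀ pl : Place K, pl ∉ S → pl.v x = 0

/-- The ring of `S`-integers of `K`. -/
def SIntegers (S : Finset (Place K)) : Subring K where
  carrier := {x : K | ∀ pl : Place K, pl ∉ S → 0 ≤ pl.v x}
  zero_mem' := fun pl _ => le_of_eq pl.v_zero.symm
  one_mem' := fun pl _ => le_of_eq pl.v_one.symm
  add_mem' := fun hx hy pl hpl => pl.v_add_nonneg (hx pl hpl) (hy pl hpl)
  mul_mem' := fun hx hy pl hpl => pl.v_mul_nonneg (hx pl hpl) (hy pl hpl)
  neg_mem' := fun {x} hx pl hpl => show 0 ≤ pl.v (-x) by rw [pl.v_neg]; exact hx pl hpl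

/-- The local ring `R_𝔭 = {x : v_𝔭(x) ≥ 0}` at the place `pl`. -/
def integersAt (pl : Place K) : Subring K where
  carrier := {x : K | 0 ≤ pl.v x}
  zero_mem' := le_of_eq pl.v_zero.symm
  one_mem' := le_of_eq pl.v_one.symm
  add_mem' := fun hx hy => pl.v_add_nonneg hx hy
  mul_mem' := fun hx hy => pl.v_mul_nonneg hx hy
  neg_mem' := fun {x} hx => show 0 ≤ pl.v (-x) by rw [pl.v_neg]; exact hx

/-- The maximal ideal `{x : v_𝔭(x) > 0}` of the local ring at `pl`. -/
def maxIdealAt (pl : Place K) : Ideal ↥(integersAt pl) where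
  carrier := {x : ↥(integersAt pl) | (x : K) = 0 ∨ 0 < pl.v (x : K)}
  zero_mem' := Or.inl rfl
  add_mem' := fun {a b} ha hb => by
    have h := pl.hred_add (a := (a : K)) (b := (b : K)) ha hb
    show ((a + b : ↥(integersAt pl)) : K) = 0 ∨ 0 < pl.v ((a + b : ↥(integersAt pl)) : K)
    push_cast
    exact h
  smul_mem' := fun c {x} hx => by
    have h := pl.hred_mul (a := (c : K)) (b := (x : K)) c.2 hx
    show ((c • x : ↥(integersAt pl)) : K) = 0 ∨ 0 < pl.v ((c • x : ↥(integersAt pl)) : K)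
    rw [smul_eq_mul]
    push_cast
    exact h

/-- The residue field `k(𝔭)` at the place `pl`. -/
def Residue (pl : Place K) : Type _ := ↥(integersAt pl) ⧸ maxIdealAt pl

/-- Value at `(x,y)` of `∂F/∂x` for the binary form `F` of degree `d` with coefficient
vector `a`. -/
def formEvalDx (d : ℕ) (a : Fin (d + 1) → K) (x y : K) : K :=
  ∑ i : Fin (d + 1), ((i : ℕ) : K) * a i * x ^ ((i : ℕ) - 1) * y ^ (d - (i : ℕ))

/-- Value at `(x,y)` of `∂G/∂y` for the binary form `G` of degree `d` with coefficient
vector `b`. -/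
def formEvalDy (d : ℕ) (b : Fin (d + 1) → K) (x y : K) : K :=
  ∑ i : Fin (d + 1), ((d - (i : ℕ) : ℕ) : K) * b i * x ^ (i : ℕ) * y ^ (d - (i : ℕ) - 1)

/-- The multiplier `λ_P` at a fixed point `P = [x:y]` of the map lifted by the pair of
degree-`d` binary forms `(a, b)`, where `c` is the scalar with `F(x,y) = c⬝x` and
`G(x,y) = c⬝y`: by the trace formula, `λ = (F_x(x,y) + G_y(x,y) - d⬝c)/c`. -/
noncomputable def multiplier (d : ℕ) (a b : Fin (d + 1) → K) (x y c : K) : K :=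
  (formEvalDx d a x y + formEvalDy d b x y - (d : K) * c) / c

section Helpers

variable {K : Type*} [Field K] (pl : Place K)

namespace Place

lemma v_pow {x : K} (hx : x ≠ 0) (n : ℕ) : pl.v (x ^ n) = n * pl.v x := by
  induction n with
  | zero => simpa using pl.v_one
  | succ n ih =>
    rw [pow_succ, pl.v_mul _ _ (pow_ne_zero n hx) hx, ih]
    push_cast; ring

lemma v_pow_nonneg {x : K} (hx : 0 ≤ pl.v x) (n : ℕ) : 0 ≤ pl.v (x ^ n) := by
  by_cases h : x = 0
  · rcases Nat.eq_zero_or_pos n with hn | hn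
    · simp [hn, pl.v_one]
    · simp [h, zero_pow hn.ne', pl.v_zero]
  · rw [pl.v_pow h n]; positivity

lemma v_sum_nonneg {ι : Type*} (s : Finset ι) (f : ι → K)
    (h : ∀ i ∈ s, 0 ≤ pl.v (f i)) : 0 ≤ pl.v (∑ i ∈ s, f i) :=
  Finset.sum_induction f (fun x => 0 ≤ pl.v x) (fun _ _ => pl.v_add_nonneg)
    (le_of_eq pl.v_zero.symm) h

lemma v_prod_nonneg {ι : Type*} (s : Finset ι) (f : ι → K)
    (h : ∀ i ∈ s, 0 ≤ pl.v (f i)) : 0 ≤ pl.v (∏ i ∈ s, f i) :=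
  Finset.prod_induction f (fun x => 0 ≤ pl.v x) (fun _ _ => pl.v_mul_nonneg)
    (le_of_eq pl.v_one.symm) h

end Place

/-- `x` reduces to zero at `pl`. -/
def Red (pl : Place K) (x : K) : Prop := x = 0 ∨ 0 < pl.v x

lemma red_sum {ι : Type*} (s : Finset ι) (f : ι → K)
    (h : ∀ i ∈ s, Red pl (f i)) : Red pl (∑ i ∈ s, f i) :=
  Finset.sum_induction f (Red pl) (fun _ _ => pl.hred_add) (Or.inl rfl) h

lemma v_det_nonneg {n : ℕ} (M : Matrix (Fin n) (Fin n) K)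
    (h : ∀ i j, 0 ≤ pl.v (M i j)) : 0 ≤ pl.v M.det := by
  rw [Matrix.det_apply]
  refine pl.v_sum_nonneg _ _ fun σ _ => ?_
  have hprod : 0 ≤ pl.v (∏ i, M (σ i) i) := pl.v_prod_nonneg _ _ fun i _ => h _ _
  rcases Int.units_eq_one_or (Equiv.Perm.sign σ) with hs | hs
  · simpa [hs] using hprod
  · rw [hs]
    simpa [Units.smul_def, pl.v_neg] using hprod

/-! ### extv lemmas -/

lemma extv_eq_top_iff {x : K} : extv pl x = ⊤ ↔ x = 0 := by
  unfold extv
  split <;> simp_all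

lemma extv_zero : extv pl (0 : K) = ⊤ := by simp [extv]

lemma extv_of_ne {x : K} (hx : x ≠ 0) : extv pl x = (pl.v x : WithTop ℤ) := by
  simp [extv, hx]

lemma extv_neg (x : K) : extv pl (-x) = extv pl x := by
  by_cases hx : x = 0
  · simp [hx]
  · rw [extv_of_ne pl hx, extv_of_ne pl (neg_ne_zero.mpr hx), pl.v_neg]

lemma extv_mul_integral (x : K) {u : K} (hu : 0 ≤ pl.v u) :
    extv pl x ≤ extv pl (x * u) := by
  by_cases hx : x = 0
  · simp [hx, extv_zero]
  by_cases hu0 : u = 0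
  · simp [hu0, extv_zero]
  rw [extv_of_ne pl hx, extv_of_ne pl (mul_ne_zero hx hu0), pl.v_mul x u hx hu0]
  exact_mod_cast le_add_of_nonneg_right hu

lemma extv_mul_vzero (x : K) {u : K} (hu0 : u ≠ 0) (hu : pl.v u = 0) :
    extv pl (x * u) = extv pl x := by
  by_cases hx : x = 0
  · simp [hx, extv_zero]
  rw [extv_of_ne pl hx, extv_of_ne pl (mul_ne_zero hx hu0), pl.v_mul x u hx hu0, hu, add_zero]

lemma extv_add_min (x y : K) : min (extv pl x) (extv pl y) ≤ extv pl (x + y) := by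
  by_cases hx : x = 0
  · simp [hx, extv_zero]
  by_cases hy : y = 0
  · simp [hy, extv_zero]
  by_cases hxy : x + y = 0
  · simp [hxy, extv_zero]
  rw [extv_of_ne pl hx, extv_of_ne pl hy, extv_of_ne pl hxy]
  have := pl.v_add x y hx hy hxy
  rw [← WithTop.coe_min]
  exact_mod_cast this

/-! ### vminVec and dd -/

lemma vec_ne_zero_iff (w : Fin 2 → K) : w ≠ 0 ↔ (w 0 ≠ 0 ∨ w 1 ≠ 0) := by
  constructor
  · intro h
    by_contra hc
    push_neg at hc
    exact h (funext fun i => by fin_cases i <;> simp [hc.1, hc.2])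
  · rintro (h | h) h0 <;> simp [h0] at h

lemma vminVec_smul (w : Fin 2 → K) (hw : w ≠ 0) {c : K} (hc : c ≠ 0) :
    vminVec pl (c • w) = pl.v c + vminVec pl w := by
  rw [vec_ne_zero_iff] at hw
  unfold vminVec
  have h0 : (c • w) 0 = c * w 0 := rfl
  have h1 : (c • w) 1 = c * w 1 := rfl
  rw [h0, h1]
  by_cases hw0 : w 0 = 0
  · have hw1 : w 1 ≠ 0 := hw.resolve_left (by simp [hw0])
    simp [hw0, mul_ne_zero hc hw1, pl.v_mul c (w 1) hc hw1]
  by_cases hw1 : w 1 = 0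
  · simp [hw1, mul_ne_zero hc hw0, hw0, pl.v_mul c (w 0) hc hw0]
  · simp only [mul_eq_zero, hc, hw0, hw1, or_self, if_false,
      pl.v_mul c (w 0) hc hw0, pl.v_mul c (w 1) hc hw1]
    omega

/-- The logarithmic distance computed on explicit homogeneous coordinates. -/
noncomputable def dd (pl : Place K) (w1 w2 : Fin 2 → K) : WithTop ℤ :=
  extv pl (w1 0 * w2 1 - w2 0 * w1 1) +
    ((-(vminVec pl w1) - vminVec pl w2 : ℤ) : WithTop ℤ)

lemma logDist_eq_dd (P Q : P1 K) : logDist pl P Q = dd pl P.rep Q.rep := rfl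

lemma dd_comm (w1 w2 : Fin 2 → K) : dd pl w1 w2 = dd pl w2 w1 := by
  unfold dd
  rw [show w2 0 * w1 1 - w1 0 * w2 1 = -(w1 0 * w2 1 - w2 0 * w1 1) by ring, extv_neg]
  ring_nf

lemma dd_smul_left (w1 w2 : Fin 2 → K) (hw1 : w1 ≠ 0) {c : K} (hc : c ≠ 0) :
    dd pl (c • w1) w2 = dd pl w1 w2 := by
  unfold dd
  have h0 : (c • w1) 0 = c * w1 0 := rfl
  have h1 : (c • w1) 1 = c * w1 1 := rfl
  rw [h0, h1, vminVec_smul pl w1 hw1 hc,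
    show c * w1 0 * w2 1 - w2 0 * (c * w1 1) = (w1 0 * w2 1 - w2 0 * w1 1) * c by ring]
  by_cases hD : w1 0 * w2 1 - w2 0 * w1 1 = 0
  · simp [hD, extv_zero]
  · rw [extv_of_ne pl hD, extv_of_ne pl (mul_ne_zero hD hc),
      pl.v_mul _ _ hD hc, ← WithTop.coe_add, ← WithTop.coe_add]
    congr 1
    ring

lemma logDist_eq_of_mk (P Q : P1 K) (w1 w2 : Fin 2 → K) (hw1 : w1 ≠ 0) (hw2 : w2 ≠ 0)
    (h1 : P = Projectivization.mk K w1 hw1) (h2 : Q = Projectivization.mk K w2 hw2) :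
    logDist pl P Q = dd pl w1 w2 := by
  have hrep1 : Projectivization.mk K P.rep P.rep_nonzero = Projectivization.mk K w1 hw1 := by
    rw [Projectivization.mk_rep]; exact h1
  have hrep2 : Projectivization.mk K Q.rep Q.rep_nonzero = Projectivization.mk K w2 hw2 := by
    rw [Projectivization.mk_rep]; exact h2
  rw [Projectivization.mk_eq_mk_iff] at hrep1 hrep2
  obtain ⟨c1, hc1⟩ := hrep1
  obtain ⟨c2, hc2⟩ := hrep2
  have e1 : (c1 • w1 : Fin 2 → K) = (c1 : K) • w1 := rfl
  have e2 : (c2 • w2 : Fin 2 → K) = (c2 : K) • w2 := rfl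
  rw [logDist_eq_dd, ← hc1, ← hc2, e1, e2]
  rw [dd_smul_left pl w1 _ hw1 c1.ne_zero, dd_comm, dd_smul_left pl w2 _ hw2 c2.ne_zero,
    dd_comm]

lemma logDist_self (P : P1 K) : logDist pl P P = ⊤ := by
  rw [logDist_eq_dd]
  unfold dd
  rw [show P.rep 0 * P.rep 1 - P.rep 0 * P.rep 1 = 0 by ring, extv_zero, WithTop.top_add]

/-- A normalized coordinate vector at `pl`. -/
def Nrm (pl : Place K) (w : Fin 2 → K) : Prop :=
  (∀ i, 0 ≤ pl.v (w i)) ∧ (∃ i, w i ≠ 0 ∧ pl.v (w i) = 0)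

lemma Nrm.ne_zero {w : Fin 2 → K} (h : Nrm pl w) : w ≠ 0 := by
  obtain ⟨i, hi, _⟩ := h.2
  intro h0
  rw [h0] at hi
  exact hi rfl

lemma Nrm.vmin_eq_zero {w : Fin 2 → K} (h : Nrm pl w) : vminVec pl w = 0 := by
  obtain ⟨hint, i, hi, hvi⟩ := h
  unfold vminVec
  by_cases hw0 : w 0 = 0
  · have : i = 1 := by
      fin_cases i
      · exact absurd hw0 hi
      · rfl
    rw [this] at hvi
    simp [hw0, hvi]
  by_cases hw1 : w 1 = 0
  · have : i = 0 := by
      fin_cases i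
      · rfl
      · exact absurd hw1 hi
    rw [this] at hvi
    simp [hw0, hw1, hvi]
  · simp only [hw0, hw1, if_false]
    have h0 := hint 0
    have h1 := hint 1
    fin_cases i <;> simp_all <;> omega

lemma exists_nrm_rep (P : P1 K) :
    ∃ (w : Fin 2 → K) (hw : w ≠ 0), P = Projectivization.mk K w hw ∧ Nrm pl w := by
  obtain ⟨c, hc, hvc⟩ := pl.v_surj (-(vminVec pl P.rep))
  have hrep := P.rep_nonzero
  refine ⟨c • P.rep, fun h0 => hrep (by
    have := smul_eq_zero.mp h0
    tauto), ?_, ?_, ?_⟩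
  · symm
    conv_rhs => rw [← Projectivization.mk_rep P]
    rw [Projectivization.mk_eq_mk_iff]
    exact ⟨Units.mk0 c hc, by rw [Units.smul_def, Units.val_mk0]⟩
  · intro i
    have hi : (c • P.rep) i = c * P.rep i := rfl
    rw [hi]
    by_cases h : P.rep i = 0
    · simp [h, pl.v_zero]
    · rw [pl.v_mul c _ hc h, hvc]
      have : vminVec pl P.rep ≤ pl.v (P.rep i) := by
        rw [vec_ne_zero_iff] at hrep
        unfold vminVec
        by_cases h0 : P.rep 0 = 0 <;> by_cases h1 : P.rep 1 = 0 <;>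
          fin_cases i <;> simp_all <;> omega
      omega
  · -- some coordinate achieves the min
    rw [vec_ne_zero_iff] at hrep
    have key : ∃ i, P.rep i ≠ 0 ∧ pl.v (P.rep i) = vminVec pl P.rep := by
      unfold vminVec
      by_cases h0 : P.rep 0 = 0
      · exact ⟨1, hrep.resolve_left (by simp [h0]), by simp [h0]⟩
      by_cases h1 : P.rep 1 = 0
      · exact ⟨0, h0, by simp [h0, h1]⟩
      · rcases le_total (pl.v (P.rep 0)) (pl.v (P.rep 1)) with h | h
        · exact ⟨0, h0, by simp only [h0, h1, if_false]; omega⟩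
        · exact ⟨1, h1, by simp only [h0, h1, if_false]; omega⟩
    obtain ⟨i, hi, hv⟩ := key
    refine ⟨i, mul_ne_zero hc hi, ?_⟩
    show pl.v (c * P.rep i) = 0
    rw [pl.v_mul c _ hc hi, hvc, hv]
    ring

lemma dd_nrm (w1 w2 : Fin 2 → K) (h1 : Nrm pl w1) (h2 : Nrm pl w2) :
    dd pl w1 w2 = extv pl (w1 0 * w2 1 - w2 0 * w1 1) := by
  unfold dd
  rw [h1.vmin_eq_zero, h2.vmin_eq_zero]
  simp

lemma dd_triangle (w1 w2 w3 : Fin 2 → K) (h1 : Nrm pl w1) (h2 : Nrm pl w2) (h3 : Nrm pl w3) :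
    min (dd pl w1 w2) (dd pl w2 w3) ≤ dd pl w1 w3 := by
  rw [dd_nrm pl w1 w2 h1 h2, dd_nrm pl w2 w3 h2 h3, dd_nrm pl w1 w3 h1 h3]
  obtain ⟨i, hi, hvi⟩ := h2.2
  set D12 := w1 0 * w2 1 - w2 0 * w1 1 with hD12
  set D23 := w2 0 * w3 1 - w3 0 * w2 1 with hD23
  set D13 := w1 0 * w3 1 - w3 0 * w1 1 with hD13
  have key : ∀ (u c c' : K), D13 * u = D12 * c + D23 * c' → u ≠ 0 → pl.v u = 0 →
      0 ≤ pl.v c → 0 ≤ pl.v c' → min (extv pl D12) (extv pl D23) ≤ extv pl D13 := by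
    intro u c c' hiden hu hvu hc hc'
    calc min (extv pl D12) (extv pl D23)
        ≤ min (extv pl (D12 * c)) (extv pl (D23 * c')) :=
          min_le_min (extv_mul_integral pl D12 hc) (extv_mul_integral pl D23 hc')
      _ ≤ extv pl (D12 * c + D23 * c') := extv_add_min pl _ _
      _ = extv pl (D13 * u) := by rw [hiden]
      _ = extv pl D13 := extv_mul_vzero pl D13 hu hvu
  fin_cases i
  · exact key (w2 0) (w3 0) (w1 0) (by rw [hD12, hD23, hD13]; ring) hi hvi (h3.1 0) (h1.1 0)
  · exact key (w2 1) (w3 1) (w1 1) (by rw [hD12, hD23, hD13]; ring) hi hvi (h3.1 1) (h1.1 1)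

lemma logDist_triangle (P Q R : P1 K) :
    min (logDist pl P Q) (logDist pl Q R) ≤ logDist pl P R := by
  obtain ⟨w1, hw1, hP, hn1⟩ := exists_nrm_rep pl P
  obtain ⟨w2, hw2, hQ, hn2⟩ := exists_nrm_rep pl Q
  obtain ⟨w3, hw3, hR, hn3⟩ := exists_nrm_rep pl R
  rw [logDist_eq_of_mk pl P Q w1 w2 hw1 hw2 hP hQ,
    logDist_eq_of_mk pl Q R w2 w3 hw2 hw3 hQ hR,
    logDist_eq_of_mk pl P R w1 w3 hw1 hw3 hP hR]
  exact dd_triangle pl w1 w2 w3 hn1 hn2 hn3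

/-! ### formEval estimates and the cross factorization -/

lemma v_formEval_nonneg (d : ℕ) (a : Fin (d + 1) → K) (x y : K)
    (ha : ∀ i, 0 ≤ pl.v (a i)) (hx : 0 ≤ pl.v x) (hy : 0 ≤ pl.v y) :
    0 ≤ pl.v (formEval d a x y) :=
  pl.v_sum_nonneg _ _ fun i _ =>
    pl.v_mul_nonneg (pl.v_mul_nonneg (ha i) (pl.v_pow_nonneg hx _)) (pl.v_pow_nonneg hy _)

lemma mono_cross_le (x1 y1 x2 y2 : K) (h1 : 0 ≤ pl.v x1) (h2 : 0 ≤ pl.v y1)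
    (h3 : 0 ≤ pl.v x2) (h4 : 0 ≤ pl.v y2) (i m r : ℕ) :
    ∃ E : K, x1 ^ i * y1 ^ (r + m) * (x2 ^ (i + m) * y2 ^ r)
      - x2 ^ i * y2 ^ (r + m) * (x1 ^ (i + m) * y1 ^ r) = (x1 * y2 - x2 * y1) * E
      ∧ 0 ≤ pl.v E := by
  refine ⟨-((x1 ^ i * x2 ^ i * y1 ^ r * y2 ^ r) *
    (∑ t ∈ Finset.range m, (x1 * y2) ^ t * (x2 * y1) ^ (m - 1 - t))), ?_, ?_⟩
  · have g := geom_sum₂_mul (x1 * y2) (x2 * y1) m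
    linear_combination (x1 ^ i * x2 ^ i * y1 ^ r * y2 ^ r) * g
  · rw [pl.v_neg]
    refine pl.v_mul_nonneg ?_ (pl.v_sum_nonneg _ _ fun t _ => pl.v_mul_nonneg
      (pl.v_pow_nonneg (pl.v_mul_nonneg h1 h4) _) (pl.v_pow_nonneg (pl.v_mul_nonneg h3 h2) _))
    exact pl.v_mul_nonneg (pl.v_mul_nonneg (pl.v_mul_nonneg (pl.v_pow_nonneg h1 _)
      (pl.v_pow_nonneg h3 _)) (pl.v_pow_nonneg h2 _)) (pl.v_pow_nonneg h4 _)

lemma mono_cross (d : ℕ) (x1 y1 x2 y2 : K) (h1 : 0 ≤ pl.v x1) (h2 : 0 ≤ pl.v y1)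
    (h3 : 0 ≤ pl.v x2) (h4 : 0 ≤ pl.v y2) (i j : Fin (d + 1)) :
    ∃ E : K, x1 ^ (i : ℕ) * y1 ^ (d - (i : ℕ)) * (x2 ^ (j : ℕ) * y2 ^ (d - (j : ℕ)))
      - x2 ^ (i : ℕ) * y2 ^ (d - (i : ℕ)) * (x1 ^ (j : ℕ) * y1 ^ (d - (j : ℕ)))
      = (x1 * y2 - x2 * y1) * E ∧ 0 ≤ pl.v E := by
  have hi := i.isLt
  have hj := j.isLt
  rcases le_total (i : ℕ) (j : ℕ) with hij | hij
  · set m := (j : ℕ) - (i : ℕ) with hm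
    set r := d - (j : ℕ) with hr
    have e1 : (j : ℕ) = (i : ℕ) + m := by omega
    have e2 : d - (i : ℕ) = r + m := by omega
    rw [e1, e2]
    exact mono_cross_le pl x1 y1 x2 y2 h1 h2 h3 h4 (i : ℕ) m r
  · set m := (i : ℕ) - (j : ℕ) with hm
    set r := d - (i : ℕ) with hr
    have e1 : (i : ℕ) = (j : ℕ) + m := by omega
    have e2 : d - (j : ℕ) = r + m := by omega
    obtain ⟨E, hE, hEv⟩ := mono_cross_le pl x1 y1 x2 y2 h1 h2 h3 h4 (j : ℕ) m r
    refine ⟨-E, ?_, by rwa [pl.v_neg]⟩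
    rw [e1, e2]
    linear_combination (-1 : K) * hE

lemma formEval_cross (d : ℕ) (a b : Fin (d + 1) → K) (x1 y1 x2 y2 : K)
    (ha : ∀ i, 0 ≤ pl.v (a i)) (hb : ∀ i, 0 ≤ pl.v (b i))
    (hx1 : 0 ≤ pl.v x1) (hy1 : 0 ≤ pl.v y1) (hx2 : 0 ≤ pl.v x2) (hy2 : 0 ≤ pl.v y2) :
    ∃ E : K, formEval d a x1 y1 * formEval d b x2 y2
        - formEval d a x2 y2 * formEval d b x1 y1 = (x1 * y2 - x2 * y1) * E ∧ 0 ≤ pl.v E := by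
  choose E hE hEv using mono_cross pl d x1 y1 x2 y2 hx1 hy1 hx2 hy2
  refine ⟨∑ i : Fin (d + 1), ∑ j : Fin (d + 1), a i * b j * E i j, ?_, ?_⟩
  · unfold formEval
    rw [Finset.sum_mul_sum, Finset.sum_mul_sum, ← Finset.sum_sub_distrib, Finset.mul_sum]
    refine Finset.sum_congr rfl fun i _ => ?_
    rw [← Finset.sum_sub_distrib, Finset.mul_sum]
    refine Finset.sum_congr rfl fun j _ => ?_
    linear_combination (a i * b j) * hE i j
  · refine pl.v_sum_nonneg _ _ fun i _ => pl.v_sum_nonneg _ _ fun j _ => ?_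
    exact pl.v_mul_nonneg (pl.v_mul_nonneg (ha i) (hb j)) (hEv i j)

/-! ### Sylvester matrix computations -/

lemma sylvester_row_sum (d : ℕ) (c : Fin (d + 1) → K) (x y : K) (s : ℕ) (hsd : s < d) :
    (∑ j : Fin (d + d),
      (if h : s ≤ (j : ℕ) ∧ (j : ℕ) ≤ s + d then c ⟨(j : ℕ) - s, by omega⟩ else 0) *
        (x ^ (j : ℕ) * y ^ (d + d - 1 - (j : ℕ))))
    = x ^ s * y ^ (d - 1 - s) * formEval d c x y := by
  classical
  have hsub : (Finset.univ : Finset (Fin (d + 1))).image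
      (fun t : Fin (d + 1) => (⟨s + (t : ℕ), by have := t.isLt; omega⟩ : Fin (d + d)))
      ⊆ Finset.univ := Finset.subset_univ _
  rw [← Finset.sum_subset hsub (fun j _ hj => ?_)]
  · rw [Finset.sum_image (fun t1 _ t2 _ h => by
      apply Fin.ext
      have := congrArg Fin.val h
      simpa using this)]
    unfold formEval
    rw [Finset.mul_sum]
    refine Finset.sum_congr rfl fun t _ => ?_
    have ht := t.isLt
    rw [dif_pos ⟨by simp, by simp; omega⟩]
    simp only [Fin.val_mk, Nat.add_sub_cancel_left, Fin.eta]
    have hy : d + d - 1 - (s + (t : ℕ)) = (d - 1 - s) + (d - (t : ℕ)) := by omega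
    rw [hy, pow_add, pow_add]
    ring
  · -- vanishing off the image
    rw [dif_neg, zero_mul]
    rintro ⟨hj1, hj2⟩
    exact hj (Finset.mem_image.mpr ⟨⟨(j : ℕ) - s, by omega⟩, Finset.mem_univ _, by
      apply Fin.ext
      simp
      omega⟩)

lemma sylvester_mulVec (d : ℕ) (a b : Fin (d + 1) → K) (x y : K) (i : Fin (d + d)) :
    ((sylvester d a b).mulVec fun j : Fin (d + d) => x ^ (j : ℕ) * y ^ (d + d - 1 - (j : ℕ))) i
    = if (i : ℕ) < d then x ^ (i : ℕ) * y ^ (d - 1 - (i : ℕ)) * formEval d a x y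
      else x ^ ((i : ℕ) - d) * y ^ (d - 1 - ((i : ℕ) - d)) * formEval d b x y := by
  have hi2 := i.isLt
  simp only [Matrix.mulVec, dotProduct, sylvester, Matrix.of_apply]
  by_cases hi : (i : ℕ) < d
  · rw [if_pos hi]
    simp only [dif_pos hi]
    exact sylvester_row_sum d a x y (i : ℕ) hi
  · rw [if_neg hi]
    simp only [dif_neg hi]
    rw [← sylvester_row_sum d b x y ((i : ℕ) - d) (by omega)]
    refine Finset.sum_congr rfl fun j _ => ?_
    congr 1
    split_ifs with h1 h2 h2 <;> first | rfl | (exfalso; omega)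

lemma sylvester_entries_nonneg (d : ℕ) (a b : Fin (d + 1) → K)
    (ha : ∀ i, 0 ≤ pl.v (a i)) (hb : ∀ i, 0 ≤ pl.v (b i)) (i j : Fin (d + d)) :
    0 ≤ pl.v (sylvester d a b i j) := by
  unfold sylvester
  rw [Matrix.of_apply]
  split_ifs <;> first | exact ha _ | exact hb _ | exact le_of_eq pl.v_zero.symm

lemma adjugate_entries_nonneg {n : ℕ} (M : Matrix (Fin n) (Fin n) K)
    (h : ∀ i j, 0 ≤ pl.v (M i j)) (i j : Fin n) : 0 ≤ pl.v (M.adjugate i j) := by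
  rw [Matrix.adjugate_apply]
  refine v_det_nonneg pl _ fun k l => ?_
  rw [Matrix.updateRow_apply]
  split
  · rcases eq_or_ne l i with hl | hl
    · simp [hl, Pi.single_apply, pl.v_one]
    · simp [Pi.single_apply, hl, pl.v_zero]
  · exact h k l

lemma lift_not_both_red (d : ℕ) (hd : 1 ≤ d) (a b : Fin (d + 1) → K)
    (ha : ∀ i, 0 ≤ pl.v (a i)) (hb : ∀ i, 0 ≤ pl.v (b i))
    (hres0 : resultant d a b ≠ 0) (hres : pl.v (resultant d a b) = 0)
    (w : Fin 2 → K) (hw : Nrm pl w) :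
    ¬(Red pl (formEval d a (w 0) (w 1)) ∧ Red pl (formEval d b (w 0) (w 1))) := by
  rintro ⟨hF, hG⟩
  obtain ⟨idx, hu0, hvu⟩ := hw.2
  set x := w 0 with hx
  set y := w 1 with hy
  set S := sylvester d a b with hS
  set mv : Fin (d + d) → K := fun j => x ^ (j : ℕ) * y ^ (d + d - 1 - (j : ℕ)) with hmv
  have key : S.adjugate.mulVec (S.mulVec mv) = S.det • mv := by
    rw [Matrix.mulVec_mulVec, Matrix.adjugate_mul, Matrix.smul_mulVec,
      Matrix.one_mulVec]
  obtain ⟨j0, hj0⟩ : ∃ j0 : Fin (d + d), mv j0 = (w idx) ^ (d + d - 1) := by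
    fin_cases idx
    · refine ⟨⟨d + d - 1, by omega⟩, ?_⟩
      simp [hmv, ← hx]
    · refine ⟨⟨0, by omega⟩, ?_⟩
      simp [hmv, ← hy]
  have hred : Red pl (S.det * mv j0) := by
    have := congrFun key j0
    rw [Pi.smul_apply, smul_eq_mul] at this
    rw [← this]
    simp only [Matrix.mulVec, dotProduct]
    refine red_sum pl _ _ fun i _ => ?_
    refine pl.hred_mul (adjugate_entries_nonneg pl S
      (sylvester_entries_nonneg pl d a b ha hb) j0 i) ?_
    have hmvi : (∑ x : Fin (d + d), S i x * mv x) = (S.mulVec mv) i := rfl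
    rw [hmvi, hS, hmv, sylvester_mulVec]
    split_ifs
    · refine pl.hred_mul ?_ hF
      exact pl.v_mul_nonneg (pl.v_pow_nonneg (hw.1 0) _) (pl.v_pow_nonneg (hw.1 1) _)
    · refine pl.hred_mul ?_ hG
      exact pl.v_mul_nonneg (pl.v_pow_nonneg (hw.1 0) _) (pl.v_pow_nonneg (hw.1 1) _)
  have hne : S.det * mv j0 ≠ 0 := by
    rw [hj0]
    exact mul_ne_zero hres0 (pow_ne_zero _ hu0)
  have hval : pl.v (S.det * mv j0) = 0 := by
    have hdet : S.det = resultant d a b := rfl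
    rw [hj0, hdet, pl.v_mul _ _ hres0 (pow_ne_zero _ hu0), pl.v_pow hu0, hres, hvu]
    ring
  rcases hred with h0 | hpos
  · exact hne h0
  · omega

lemma nrm_image (F G : K) (hF : 0 ≤ pl.v F) (hG : 0 ≤ pl.v G)
    (h : ¬(Red pl F ∧ Red pl G)) : Nrm pl ![F, G] := by
  constructor
  · intro i
    fin_cases i <;> simpa
  · rcases not_and_or.mp h with h | h <;> unfold Red at h <;> push_neg at h
    · exact ⟨0, by simpa using ⟨h.1, le_antisymm h.2 hF⟩⟩
    · exact ⟨1, by simpa using ⟨h.1, le_antisymm h.2 hG⟩⟩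

/-! ### Good reduction is non-expanding for the logarithmic distance -/

lemma good_nonexpand {φ : P1 K → P1 K} (h : GoodReduction pl φ) (P Q : P1 K) :
    logDist pl P Q ≤ logDist pl (φ P) (φ Q) := by
  by_cases hPQ : φ P = φ Q
  · rw [hPQ, logDist_self]
    exact le_top
  obtain ⟨d, a, b, ⟨hres0, hlift⟩, ha, hb, hres⟩ := h
  obtain ⟨w1, hw1, hP, hn1⟩ := exists_nrm_rep pl P
  obtain ⟨w2, hw2, hQ, hn2⟩ := exists_nrm_rep pl Q
  have hw1' : ¬(w1 0 = 0 ∧ w1 1 = 0) := by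
    rw [vec_ne_zero_iff] at hw1; tauto
  have hw2' : ¬(w2 0 = 0 ∧ w2 1 = 0) := by
    rw [vec_ne_zero_iff] at hw2; tauto
  obtain ⟨hFG1, hφ1⟩ := hlift (w1 0) (w1 1) hw1'
  obtain ⟨hFG2, hφ2⟩ := hlift (w2 0) (w2 1) hw2'
  have hPmk : P1.mk (w1 0) (w1 1) hw1' = P := by
    rw [hP]
    unfold P1.mk
    rw [Projectivization.mk_eq_mk_iff]
    exact ⟨1, by rw [one_smul]; funext i; fin_cases i <;> rfl⟩
  have hQmk : P1.mk (w2 0) (w2 1) hw2' = Q := by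
    rw [hQ]
    unfold P1.mk
    rw [Projectivization.mk_eq_mk_iff]
    exact ⟨1, by rw [one_smul]; funext i; fin_cases i <;> rfl⟩
  have hfzero : ∀ (c : Fin 1 → K) (x y : K), formEval 0 c x y = c 0 := by
    intro c x y
    unfold formEval
    simp
  have hd : 1 ≤ d := by
    by_contra hd0
    have hd0' : d = 0 := by omega
    subst hd0'
    apply hPQ
    rw [← hPmk, ← hQmk, hφ1, hφ2]
    unfold P1.mk
    rw [Projectivization.mk_eq_mk_iff]
    refine ⟨1, ?_⟩
    rw [one_smul]
    funext i
    fin_cases i <;> simp [hfzero]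
  set F1 := formEval d a (w1 0) (w1 1) with hF1
  set G1 := formEval d b (w1 0) (w1 1) with hG1
  set F2 := formEval d a (w2 0) (w2 1) with hF2
  set G2 := formEval d b (w2 0) (w2 1) with hG2
  have hvF1 : 0 ≤ pl.v F1 := v_formEval_nonneg pl d a _ _ ha (hn1.1 0) (hn1.1 1)
  have hvG1 : 0 ≤ pl.v G1 := v_formEval_nonneg pl d b _ _ hb (hn1.1 0) (hn1.1 1)
  have hvF2 : 0 ≤ pl.v F2 := v_formEval_nonneg pl d a _ _ ha (hn2.1 0) (hn2.1 1)
  have hvG2 : 0 ≤ pl.v G2 := v_formEval_nonneg pl d b _ _ hb (hn2.1 0) (hn2.1 1)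
  have hnb1 := lift_not_both_red pl d hd a b ha hb hres0 hres w1 hn1
  have hnb2 := lift_not_both_red pl d hd a b ha hb hres0 hres w2 hn2
  have hnrm1 : Nrm pl ![F1, G1] := nrm_image pl F1 G1 hvF1 hvG1 hnb1
  have hnrm2 : Nrm pl ![F2, G2] := nrm_image pl F2 G2 hvF2 hvG2 hnb2
  have hvec1 : (![F1, G1] : Fin 2 → K) ≠ 0 := hnrm1.ne_zero
  have hvec2 : (![F2, G2] : Fin 2 → K) ≠ 0 := hnrm2.ne_zero
  have hφP : φ P = Projectivization.mk K ![F1, G1] hvec1 := by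
    rw [← hPmk, hφ1]
    rfl
  have hφQ : φ Q = Projectivization.mk K ![F2, G2] hvec2 := by
    rw [← hQmk, hφ2]
    rfl
  rw [logDist_eq_of_mk pl (φ P) (φ Q) ![F1, G1] ![F2, G2] hvec1 hvec2 hφP hφQ,
    logDist_eq_of_mk pl P Q w1 w2 hw1 hw2 hP hQ,
    dd_nrm pl _ _ hnrm1 hnrm2, dd_nrm pl w1 w2 hn1 hn2]
  simp only [Matrix.cons_val_zero, Matrix.cons_val_one, Matrix.head_cons]
  obtain ⟨E, hE, hEv⟩ := formEval_cross pl d a b (w1 0) (w1 1) (w2 0) (w2 1) ha hb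
    (hn1.1 0) (hn1.1 1) (hn2.1 0) (hn2.1 1)
  rw [← hF1, ← hG1, ← hF2, ← hG2] at hE
  rw [show F1 * G2 - F2 * G1 = (w1 0 * w2 1 - w2 0 * w1 1) * E from hE]
  exact extv_mul_integral pl _ hEv

end Helpers


/-- Lemma 3.4.  Let `K` be a global field of characteristic `p` and `S`
a finite set of places of `K`.  Let `φ` be an endomorphism of `ℙ¹` defined over `K` with
good reduction outside `S` and let `P₀ ∈ ℙ¹(K)` be periodic of minimal period `p^e`; put
`P_i = φ^i(P₀)`.  Then for every integer of the form `p^k·n` with `p ∤ n` and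
`n < p^(e-k)`, we have `δ_𝔭(P₀, P_(p^k)) = δ_𝔭(P₀, P_(p^k·n))` for every `𝔭 ∉ S`. -/
theorem stmt10 (K : Type) [Field K] (hK : IsGlobalField K)
    (p : ℕ) [CharP K p]
    (S : Finset (Place K)) (φ : P1 K → P1 K) (hφ : IsEndo φ)
    (hgood : ∀ pl : Place K, pl ∉ S → GoodReduction pl φ)
    (P₀ : P1 K) (hP₀ : PeriodicPt φ P₀)
    (e : ℕ) (hmp : Function.minimalPeriod φ P₀ = p ^ e)
    (k nn : ℕ) (hnn : ¬ p ∣ nn) (hlt : nn < p ^ (e - k))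
    (pl : Place K) (hpl : pl ∉ S) :
    logDist pl P₀ (φ^[p ^ k] P₀) = logDist pl P₀ (φ^[p ^ k * nn] P₀) := by
  have hne : nn ≠ 0 := fun h => hnn (h ▸ dvd_zero p)
  have hN2 : 2 ≤ p ^ (e - k) := by omega
  have hp : p.Prime := by
    rcases CharP.char_is_prime_or_zero K p with h | h
    · exact h
    · subst h
      rcases Nat.eq_zero_or_pos (e - k) with h0 | h0
      · rw [h0, pow_zero] at hN2; omega
      · rw [zero_pow h0.ne'] at hN2; omega
  have hnonexp := good_nonexpand pl (hgood pl hpl)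
  set m := p ^ e with hm
  have hmpos : 0 < m := pow_pos hp.pos e
  have hper : φ^[m] P₀ = P₀ := by rw [← hmp]; exact Function.iterate_minimalPeriod
  have hpers : ∀ s : ℕ, φ^[m * s] P₀ = P₀ := by
    intro s
    induction s with
    | zero => simp
    | succ s ih => rw [Nat.mul_succ, Function.iterate_add_apply, hper, ih]
  have hiter : ∀ (t : ℕ) (P Q : P1 K), logDist pl P Q ≤ logDist pl (φ^[t] P) (φ^[t] Q) := by
    intro t
    induction t with
    | zero => intro P Q; simp
    | succ t ih =>
      intro P Q
      rw [Function.iterate_succ_apply', Function.iterate_succ_apply']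
      exact le_trans (ih P Q) (hnonexp _ _)
  set A : ℕ → WithTop ℤ := fun n => logDist pl P₀ (φ^[n] P₀) with hA
  have hshift : ∀ t n : ℕ, logDist pl (φ^[t] P₀) (φ^[t + n] P₀) = A n := by
    intro t n
    have haux : t ≤ m * t := Nat.le_mul_of_pos_left t hmpos
    refine le_antisymm ?_ ?_
    · have h2 := hiter (m * t + m - t) (φ^[t] P₀) (φ^[t + n] P₀)
      rw [← Function.iterate_add_apply, ← Function.iterate_add_apply] at h2
      have e1 : m * t + m - t + t = m * (t + 1) := by rw [Nat.mul_succ]; omega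
      have e2 : m * t + m - t + (t + n) = n + m * (t + 1) := by rw [Nat.mul_succ]; omega
      rw [e1, e2, hpers (t + 1), Function.iterate_add_apply φ n (m * (t + 1)) P₀,
        hpers (t + 1)] at h2
      exact h2
    · have h1 := hiter t P₀ (φ^[n] P₀)
      rw [← Function.iterate_add_apply] at h1
      exact h1
  have hmin : ∀ n1 n2 : ℕ, min (A n1) (A n2) ≤ A (n1 + n2) := by
    intro n1 n2
    have htr := logDist_triangle pl P₀ (φ^[n1] P₀) (φ^[n1 + n2] P₀)
    rw [hshift n1 n2] at htr
    exact htr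
  have hmult : ∀ w t : ℕ, 1 ≤ t → A w ≤ A (w * t) := by
    intro w t
    induction t with
    | zero => intro ht; exact absurd ht (by omega)
    | succ t ih =>
      intro _
      rcases Nat.eq_zero_or_pos t with h0 | h0
      · subst h0; simp
      · have hmm := hmin (w * t) w
        rw [← Nat.mul_succ] at hmm
        exact le_trans (le_min (ih h0) le_rfl) hmm
  have hAper : ∀ n s : ℕ, A (n + m * s) = A n := by
    intro n s
    show logDist pl P₀ (φ^[n + m * s] P₀) = _
    rw [Function.iterate_add_apply, hpers s]
  have hek : k ≤ e := by
    by_contra hc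
    push_neg at hc
    have : e - k = 0 := by omega
    rw [this, pow_zero] at hN2
    omega
  have hcop : Nat.Coprime nn (p ^ (e - k)) :=
    (((Nat.Prime.coprime_iff_not_dvd hp).mpr hnn).pow_left (e - k)).symm
  set N := p ^ (e - k) with hN
  obtain ⟨s, -, hs⟩ := Nat.exists_mul_mod_eq_one_of_coprime hcop (by omega)
  have hs0 : 1 ≤ s := by
    rcases Nat.eq_zero_or_pos s with h0 | h0
    · rw [h0, Nat.mul_zero, Nat.zero_mod] at hs; omega
    · exact h0
  set q := p ^ k with hq
  have hqN : q * N = m := by rw [hq, hN, hm, ← pow_add]; congr 1; omega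
  show A q = A (q * nn)
  have hdm := Nat.div_add_mod (nn * s) N
  rw [hs] at hdm
  set t := nn * s / N with ht
  have heq : q * (nn * s) = q + q * N * t := by rw [← hdm]; ring
  rw [hqN] at heq
  have hAq : A q = A (q * (nn * s)) := by rw [heq, hAper]
  have h1 : A (q * nn) ≤ A q := by
    rw [hAq, show q * (nn * s) = q * nn * s by ring]
    exact hmult (q * nn) s hs0
  exact le_antisymm (hmult q nn (by omega)) h1


end ArxivPreper
end

section
/- Let K be a global field and 𝔭 a non-archimedean place of K. For all points P_1, P_2, P_3 ∈ P^1(K), the 𝔭-adic logarithmic distance satisfies δ_𝔭(P_1, P_3) ≥ min{δ_𝔭(P_1, P_2), δ_𝔭(P_2, P_3)}. -/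
/-!
Common definitions used to formalize the statements of
"Preperiodic points for rational functions defined over a global field
in terms of good reduction" (arXiv:1403.2293).

* A (normalized, non-archimedean) place of a field `K` is modeled as a surjective
  discrete valuation `v : K → ℤ` (with the junk convention `v 0 = 0`).
* `P1 K` is the projective line over `K`; a point `[x : y]` is `P1.mk x y _`.
* An endomorphism of `P1` defined over `K` is a map `φ : P1 K → P1 K` admitting a
  lift by a pair of binary forms of a common degree `d`, given through their
  coefficient vectors, with nonvanishing resultant (the resultant is defined as
  the determinant of the Sylvester matrix).
* `φ` has good reduction at a place `pl` if it admits a lift whose coefficients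
  are `pl`-integral and whose resultant is a `pl`-unit.
* `logDist` is the `𝔭`-adic logarithmic distance `δ_𝔭`; two points of `P1 K` have
  the same reduction modulo `pl` if and only if `0 < logDist pl P Q`.
* The multiplier of a fixed point `[x:y]` of a map lifted by the forms `(a, b)` of
  degree `d` is computed by the trace formula
  `λ = (∂F/∂x (x,y) + ∂G/∂y (x,y) - d⬝c)/c`, where `c` is the scalar with
  `F(x,y) = c⬝x` and `G(x,y) = c⬝y`.
-/

namespace ArxivPreper

variable {K : Type*} [Field K]

lemma extv_mul (pl : Place K) (x y : K) :
    extv pl (x * y) = extv pl x + extv pl y := by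
  unfold extv
  by_cases hx : x = 0
  · simp [hx]
  by_cases hy : y = 0
  · simp [hy]
  · rw [if_neg hx, if_neg hy, if_neg (mul_ne_zero hx hy), pl.v_mul x y hx hy]
    push_cast
    ring

lemma extv_add (pl : Place K) (x y : K) :
    min (extv pl x) (extv pl y) ≤ extv pl (x + y) := by
  by_cases hx : x = 0
  · subst hx; rw [zero_add]; exact min_le_right _ _
  by_cases hy : y = 0
  · subst hy; rw [add_zero]; exact min_le_left _ _
  by_cases hxy : x + y = 0
  · simp [extv, hxy]
  · unfold extv
    rw [if_neg hx, if_neg hy, if_neg hxy, ← WithTop.coe_min, WithTop.coe_le_coe]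
    exact pl.v_add x y hx hy hxy

lemma extv_vmin_le (pl : Place K) (w : Fin 2 → K) (k : Fin 2) :
    ((vminVec pl w : ℤ) : WithTop ℤ) ≤ extv pl (w k) := by
  by_cases hk : w k = 0
  · simp [extv, hk]
  unfold vminVec extv
  rw [if_neg hk]
  by_cases h0 : w 0 = 0
  · fin_cases k
    · exact absurd h0 hk
    · simp [h0]
  by_cases h1 : w 1 = 0
  · fin_cases k
    · simp [h0, h1]
    · exact absurd h1 hk
  · rw [if_neg h0, if_neg h1, WithTop.coe_le_coe]
    fin_cases k
    · exact min_le_left _ _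
    · exact min_le_right _ _

lemma exists_vmin_coord (pl : Place K) (w : Fin 2 → K) (h : ¬(w 0 = 0 ∧ w 1 = 0)) :
    ∃ k : Fin 2, extv pl (w k) = ((vminVec pl w : ℤ) : WithTop ℤ) := by
  unfold vminVec extv
  by_cases h0 : w 0 = 0
  · have h1 : w 1 ≠ 0 := fun hh => h ⟨h0, hh⟩
    exact ⟨1, by simp [h0, h1]⟩
  by_cases h1 : w 1 = 0
  · exact ⟨0, by simp [h0, h1]⟩
  · rcases le_total (pl.v (w 0)) (pl.v (w 1)) with hle | hle
    · exact ⟨0, by simp [h0, h1, min_eq_left hle]⟩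
    · exact ⟨1, by simp [h0, h1, min_eq_right hle]⟩

lemma stmt16_aux (m1 m2 m3 : ℤ) (a b c : WithTop ℤ)
    (H : min (a + ((m3 : ℤ) : WithTop ℤ)) (b + ((m1 : ℤ) : WithTop ℤ))
      ≤ ((m2 : ℤ) : WithTop ℤ) + c) :
    min (a + ((-m1 - m2 : ℤ) : WithTop ℤ)) (b + ((-m2 - m3 : ℤ) : WithTop ℤ))
      ≤ c + ((-m1 - m3 : ℤ) : WithTop ℤ) := by
  induction c using WithTop.recTopCoe with
  | top => simp
  | coe c =>
    induction a using WithTop.recTopCoe with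
    | top =>
      induction b using WithTop.recTopCoe with
      | top => simp at H
      | coe b =>
        simp only [top_add, min_eq_right le_top, ← WithTop.coe_add, WithTop.coe_le_coe] at H ⊢
        omega
    | coe a =>
      induction b using WithTop.recTopCoe with
      | top =>
        simp only [top_add, min_eq_left le_top, ← WithTop.coe_add, WithTop.coe_le_coe] at H ⊢
        omega
      | coe b =>
        simp only [← WithTop.coe_add, ← WithTop.coe_min, WithTop.coe_le_coe] at H ⊢
        omega

/-- Proposition 5.1 of Morton–Silverman.  For a global field `K`, a
non-archimedean place `𝔭` of `K` and all `P₁, P₂, P₃ ∈ ℙ¹(K)`,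
`δ_𝔭(P₁,P₃) ≥ min (δ_𝔭(P₁,P₂)) (δ_𝔭(P₂,P₃))`. -/
theorem stmt16 (K : Type) [Field K] (hK : IsGlobalField K) (pl : Place K)
    (P₁ P₂ P₃ : P1 K) :
    min (logDist pl P₁ P₂) (logDist pl P₂ P₃) ≤ logDist pl P₁ P₃ := by
  have hw : ∀ P : P1 K, ¬(P.rep 0 = 0 ∧ P.rep 1 = 0) := by
    intro P ⟨h0, h1⟩
    apply P.rep_nonzero
    funext i
    fin_cases i <;> assumption
  obtain ⟨k, hk⟩ := exists_vmin_coord pl P₂.rep (hw P₂)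
  have key : P₂.rep k * (P₁.rep 0 * P₃.rep 1 - P₃.rep 0 * P₁.rep 1) =
      (P₁.rep 0 * P₂.rep 1 - P₂.rep 0 * P₁.rep 1) * P₃.rep k +
        (P₂.rep 0 * P₃.rep 1 - P₃.rep 0 * P₂.rep 1) * P₁.rep k := by
    fin_cases k <;> simp only [Fin.zero_eta, Fin.mk_one] <;> ring
  have H : min (extv pl (P₁.rep 0 * P₂.rep 1 - P₂.rep 0 * P₁.rep 1) +
        ((vminVec pl P₃.rep : ℤ) : WithTop ℤ))
      (extv pl (P₂.rep 0 * P₃.rep 1 - P₃.rep 0 * P₂.rep 1) +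
        ((vminVec pl P₁.rep : ℤ) : WithTop ℤ))
      ≤ ((vminVec pl P₂.rep : ℤ) : WithTop ℤ) +
        extv pl (P₁.rep 0 * P₃.rep 1 - P₃.rep 0 * P₁.rep 1) := by
    rw [← hk, ← extv_mul, key]
    refine le_trans ?_ (extv_add pl _ _)
    rw [extv_mul, extv_mul]
    exact min_le_min (add_le_add_right (extv_vmin_le pl P₃.rep k) _)
      (add_le_add_right (extv_vmin_le pl P₁.rep k) _)
  have h2 := stmt16_aux (vminVec pl P₁.rep) (vminVec pl P₂.rep) (vminVec pl P₃.rep) _ _ _ H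
  simpa [logDist, sub_eq_add_neg] using h2

end ArxivPreper
end
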